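/- Fix η ∈ (0,1) and r > max{ (2η−1)/(2η(1−η)²), (1−2η)/(2(1−η)η²) }. Let G : ℝ³ → ℝ³ be the vector field G(v⁰,v^η,v¹) = ( (1−η)v^η − 2rη v⁰(v¹+ηv^η), −v^η + 2r(η²v⁰v^η + (1−η)²v¹v^η + v⁰v¹), ηv^η − 2r(1−η)v¹(v⁰+(1−η)v^η) ). Then there exists an equilibrium point (v⁰,v^η,v¹) in the interior of the unit simplex, i.e. with v⁰ > 0, v^η > 0, v¹ > 0, v⁰+v^η+v¹ = 1, and G(v⁰,v^η,v¹) = (0,0,0). -/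

import Mathlib

/-- Fix `η ∈ (0,1)` and
`r > max{(2η−1)/(2η(1−η)²), (1−2η)/(2(1−η)η²)}`. Then the limiting host-state
dynamical system has an equilibrium in the interior of the unit simplex:
there are `v⁰, v^η, v¹ > 0` with `v⁰ + v^η + v¹ = 1` at which all three
components of the vector field `G` vanish. -/
theorem interior_equilibrium_exists (η r : ℝ) (hη : η ∈ Set.Ioo (0 : ℝ) 1)
    (hr : max ((2 * η - 1) / (2 * η * (1 - η) ^ 2))
      ((1 - 2 * η) / (2 * (1 - η) * η ^ 2)) < r) :
    ∃ v0 ve v1 : ℝ, 0 < v0 ∧ 0 < ve ∧ 0 < v1 ∧ v0 + ve + v1 = 1 ∧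
      (1 - η) * ve - 2 * r * η * v0 * (v1 + η * ve) = 0 ∧
      -ve + 2 * r * (η ^ 2 * v0 * ve + (1 - η) ^ 2 * v1 * ve + v0 * v1) = 0 ∧
      η * ve - 2 * r * (1 - η) * v1 * (v0 + (1 - η) * ve) = 0 := by
  obtain ⟨hη0, hη1⟩ := hη
  have h1η : 0 < 1 - η := by linarith
  have hr0 : 0 < r := by
    rcases le_or_gt η (1/2) with h | h
    · have h1 : 0 ≤ (1 - 2 * η) / (2 * (1 - η) * η ^ 2) :=
        div_nonneg (by linarith) (by positivity)
      exact lt_of_le_of_lt h1 (lt_of_le_of_lt (le_max_right _ _) hr)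
    · have h1 : 0 ≤ (2 * η - 1) / (2 * η * (1 - η) ^ 2) :=
        div_nonneg (by linarith) (by positivity)
      exact lt_of_le_of_lt h1 (lt_of_le_of_lt (le_max_left _ _) hr)
  have hR : (0:ℝ) < 2 * r * η * (1 - η) := by positivity
  set R : ℝ := 2 * r * η * (1 - η) with hRdef
  set p : ℝ := (1 - η) - (2 * η - 1) / R with hpdef
  set q : ℝ := η + (2 * η - 1) / R with hqdef
  have hpq : p + q = 1 := by rw [hpdef, hqdef]; ring
  have hp : 0 < p := by
    have h1 : (2 * η - 1) / (2 * η * (1 - η) ^ 2) < r := lt_of_le_of_lt (le_max_left _ _) hr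
    have h2 : 2 * η - 1 < r * (2 * η * (1 - η) ^ 2) := (div_lt_iff₀ (by positivity)).mp h1
    have h3 : (2 * η - 1) / R < 1 - η := (div_lt_iff₀ hR).mpr (by rw [hRdef]; nlinarith)
    rw [hpdef]; linarith
  have hq : 0 < q := by
    have h1 : (1 - 2 * η) / (2 * (1 - η) * η ^ 2) < r := lt_of_le_of_lt (le_max_right _ _) hr
    have h2 : 1 - 2 * η < r * (2 * (1 - η) * η ^ 2) := (div_lt_iff₀ (by positivity)).mp h1
    have h3 : -η < (2 * η - 1) / R := (lt_div_iff₀ hR).mpr (by rw [hRdef]; nlinarith)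
    rw [hqdef]; linarith
  set D1 : ℝ := 1 + 2 * r * η * q with hD1def
  set D2 : ℝ := 1 + 2 * r * (1 - η) * p with hD2def
  have hD1 : 0 < D1 := by rw [hD1def]; positivity
  have hD2 : 0 < D2 := by rw [hD2def]; positivity
  have hkey : η ^ 2 * D2 = (1 - η) ^ 2 * D1 := by
    rw [hD1def, hD2def, hpdef, hqdef, hRdef]
    field_simp
    ring
  set b : ℝ := 2 * r * η * q * p / ((1 - η) * D1) with hbdef
  set a : ℝ := p / D1 with hadef
  set c : ℝ := q / D2 with hcdef
  have hb : 0 < b := by rw [hbdef]; positivity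
  have ha0 : 0 < a := by rw [hadef]; positivity
  have hc0 : 0 < c := by rw [hcdef]; positivity
  have ha : a = p - (1 - η) * b := by
    rw [hadef, hbdef]; field_simp; ring
  clear_value b a c D1 D2 p q R
  have hc : c + η * b = q := by
    rw [hcdef, hbdef, mul_div_assoc', div_add_div _ _ hD2.ne' (by positivity), div_eq_iff (by positivity)]
    linear_combination (2 * r * q * p) * hkey - (q * (1 - η) * D1) * hD2def
  have hb' : (1 - η) * b * D1 = 2 * r * η * q * p := by
    rw [hbdef]; field_simp
  have hb'' : η * b * D2 = 2 * r * (1 - η) * p * q := by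
    rw [hbdef, mul_div_assoc', div_mul_eq_mul_div, div_eq_iff (by positivity)]
    linear_combination (2 * r * q * p) * hkey
  have e1 : (1 - η) * b - 2 * r * η * a * (c + η * b) = 0 := by
    linear_combination hb' - (2*r*η*a)*hc - (2*r*η*q)*ha - ((1-η)*b)*hD1def
  have e3 : η * b - 2 * r * (1 - η) * c * (a + (1 - η) * b) = 0 := by
    linear_combination hb'' - (2*r*(1-η)*c)*ha - (2*r*(1-η)*p)*hc - (η*b)*hD2def
  refine ⟨a, b, c, ha0, hb, hc0, ?_, e1, ?_, e3⟩
  · have h : a + b + c = p + q := by rw [ha]; linear_combination hc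
    rw [h, hpq]
  · linear_combination -e1 - e3
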